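/- Let b : ℝⁿ → ℝ be a polynomial with ∇b(x) ≠ 0 whenever b(x) = 0, and let C = {x : b(x) ≥ 0}. Consider the system ẋ = f(x) + g(x)u with polynomial f, g and unconstrained input U = ℝᵐ. Then C is viable if and only if there exists no x ∈ ℝⁿ satisfying b(x) = 0, ∇b(x)ᵀg(x) = 0 (all m entries of the row vector vanish), and ∇b(x)ᵀf(x) < 0. -/

import Mathlib

open Filter MvPolynomial Metric Set

noncomputable def gradSum {n : ℕ} (b : MvPolynomial (Fin n) ℝ) (y v : Fin n → ℝ) : ℝ :=
  ∑ k, eval y (pderiv k b) * v k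

lemma hasDerivAt_line {n : ℕ} (b : MvPolynomial (Fin n) ℝ) (y v : Fin n → ℝ) (t : ℝ) :
    HasDerivAt (fun τ : ℝ => eval (y + τ • v) b) (gradSum b (y + t • v) v) t := by
  induction b using MvPolynomial.induction_on with
  | C a => simpa [gradSum, pderiv_C] using hasDerivAt_const t (a : ℝ)
  | add p q hp hq =>
      have e : gradSum (p + q) (y + t • v) v
          = gradSum p (y + t • v) v + gradSum q (y + t • v) v := by
        unfold gradSum; rw [← Finset.sum_add_distrib]; simp [add_mul]
      simp only [map_add, e]
      exact hp.add hq
  | mul_X p i hp =>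
      have hX : HasDerivAt (fun τ : ℝ => y i + τ * v i) (v i) t := by
        simpa [mul_comm] using ((hasDerivAt_id t).const_mul (v i)).const_add (y i)
      have h2 := hp.mul hX
      have e : gradSum (p * X i) (y + t • v) v
          = gradSum p (y + t • v) v * (y i + t * v i) + (eval (y + t • v)) p * v i := by
        classical
        simp only [gradSum, pderiv_mul, map_add, map_mul, eval_X, pderiv_X,
          Pi.single_apply, apply_ite, map_one, map_zero, ite_mul, mul_ite, mul_one,
          mul_zero, zero_mul, add_mul]
        have h3 : (y + t • v) i = y i + t * v i := rfl
        rw [h3]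
        have split : ∀ x : Fin n, (if i = x then
            (eval (y + t • v)) ((pderiv x) p) * (y i + t * v i) * v x +
              (eval (y + t • v)) p * v x
          else (eval (y + t • v)) ((pderiv x) p) * (y i + t * v i) * v x + 0)
            = (eval (y + t • v)) ((pderiv x) p) * (y i + t * v i) * v x +
              (if i = x then (eval (y + t • v)) p * v x else 0) := by
          intro x; split <;> simp
        rw [Finset.sum_congr rfl (fun x _ => split x), Finset.sum_add_distrib,
          Finset.sum_ite_eq Finset.univ i (fun x => (eval (y + t • v)) p * v x)]
        simp [Finset.sum_mul]
        exact Finset.sum_congr rfl (fun x _ => by ring)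
      simp only [e]
      have e2 : (fun τ : ℝ => (eval (y + τ • v)) (p * X i))
          = fun τ : ℝ => (eval (y + τ • v)) p * (y i + τ * v i) := by
        funext τ; simp [Pi.add_apply, Pi.smul_apply, smul_eq_mul]
      rw [e2]
      exact h2

/-- The Euclidean-distance realization of a point of `ℝⁿ`. -/
noncomputable def toEuc {n : ℕ} (x : Fin n → ℝ) : EuclideanSpace ℝ (Fin n) :=
  (EuclideanSpace.equiv (Fin n) ℝ).symm x

lemma abs_apply_le_norm {n : ℕ} (z : EuclideanSpace ℝ (Fin n)) (k : Fin n) : |z k| ≤ ‖z‖ := by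
  rw [EuclideanSpace.norm_eq]
  have h1 : |z k| = Real.sqrt (‖z k‖ ^ 2) := by
    rw [Real.sqrt_sq_eq_abs]; simp [Real.norm_eq_abs]
  rw [h1]
  apply Real.sqrt_le_sqrt
  exact Finset.single_le_sum (f := fun i => ‖z i‖ ^ 2) (fun i _ => by positivity)
    (Finset.mem_univ k)

lemma continuous_evalE {n : ℕ} (p : MvPolynomial (Fin n) ℝ) :
    Continuous fun z : EuclideanSpace ℝ (Fin n) => eval z p :=
  (MvPolynomial.continuous_eval p).comp (EuclideanSpace.equiv (Fin n) ℝ).continuous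

lemma continuous_gradSumE {n : ℕ} (b : MvPolynomial (Fin n) ℝ) (w : Fin n → ℝ) :
    Continuous fun z : EuclideanSpace ℝ (Fin n) => gradSum b z w := by
  unfold gradSum
  exact continuous_finset_sum _ fun k _ => (continuous_evalE (pderiv k b)).mul continuous_const

/-- Local Lipschitz bound for polynomial evaluation on a Euclidean closed ball. -/
lemma exists_lip {n : ℕ} (b : MvPolynomial (Fin n) ℝ) (x : Fin n → ℝ) (r : ℝ) :
    ∃ L : ℝ, 0 < L ∧ ∀ y z : Fin n → ℝ, toEuc y ∈ Metric.closedBall (toEuc x) r →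
      toEuc z ∈ Metric.closedBall (toEuc x) r →
      |eval y b - eval z b| ≤ L * dist (toEuc y) (toEuc z) := by
  classical
  set F : EuclideanSpace ℝ (Fin n) → ℝ := fun z => ∑ k, |eval z (pderiv k b)| with hF
  have hFc : Continuous F :=
    continuous_finset_sum _ fun k _ => (continuous_evalE (pderiv k b)).abs
  obtain ⟨M, hM⟩ := (isCompact_closedBall (toEuc x) r).exists_bound_of_continuousOn
    hFc.continuousOn
  refine ⟨max M 1, lt_of_lt_of_le one_pos (le_max_right _ _), ?_⟩
  intro y z hy hz
  rcases eq_or_ne y z with rfl | hyz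
  · simp
  set d : EuclideanSpace ℝ (Fin n) := toEuc y - toEuc z with hd
  set φ : ℝ → ℝ := fun t => eval (z + t • (y - z)) b with hφ
  have hφd : ∀ t : ℝ, HasDerivAt φ (gradSum b (z + t • (y - z)) (y - z)) t :=
    fun t => hasDerivAt_line b z (y - z) t
  obtain ⟨ξ, hξ, hslope⟩ := exists_hasDerivAt_eq_slope φ
    (fun t => gradSum b (z + t • (y - z)) (y - z)) one_pos
    (HasDerivAt.continuousOn (fun t _ => hφd t)) (fun t _ => hφd t)
  have hφ1 : φ 1 = eval y b := by simp [hφ]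
  have hφ0 : φ 0 = eval z b := by simp [hφ]
  have hmid : toEuc (z + ξ • (y - z)) ∈ Metric.closedBall (toEuc x) r := by
    have : toEuc (z + ξ • (y - z)) = toEuc z + ξ • (toEuc y - toEuc z) := rfl
    rw [this]
    exact (convex_closedBall (toEuc x) r).add_smul_sub_mem hz hy ⟨hξ.1.le, hξ.2.le⟩
  have hb1 : |gradSum b (z + ξ • (y - z)) (y - z)| ≤ max M 1 * ‖d‖ := by
    calc |gradSum b (z + ξ • (y - z)) (y - z)|
        ≤ ∑ k, |eval (z + ξ • (y - z)) (pderiv k b) * (y - z) k| :=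
          Finset.abs_sum_le_sum_abs _ _
      _ ≤ ∑ k, |eval (z + ξ • (y - z)) (pderiv k b)| * ‖d‖ := by
          apply Finset.sum_le_sum
          intro k _
          rw [abs_mul]
          refine mul_le_mul_of_nonneg_left ?_ (abs_nonneg _)
          exact abs_apply_le_norm d k
      _ = F (toEuc (z + ξ • (y - z))) * ‖d‖ := by rw [← Finset.sum_mul]; rfl
      _ ≤ max M 1 * ‖d‖ := by
          refine mul_le_mul_of_nonneg_right ?_ (norm_nonneg _)
          exact le_trans (le_trans (le_abs_self _) (hM _ hmid)) (le_max_left _ _)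
  have heq : eval y b - eval z b = gradSum b (z + ξ • (y - z)) (y - z) := by
    rw [hslope, hφ1, hφ0]; ring
  rw [heq, dist_eq_norm]
  exact hb1

/-- The Bouligand tangent cone to `D ⊆ ℝⁿ` at `x`, with Euclidean distance. -/
noncomputable def tangentConeAt' {n : ℕ} (D : Set (Fin n → ℝ)) (x : Fin n → ℝ) :
    Set (Fin n → ℝ) :=
  {z | Filter.liminf (fun τ : ℝ => Metric.infDist (toEuc (x + τ • z)) (toEuc '' D) / τ)
        (nhdsWithin 0 (Set.Ioi (0 : ℝ))) = 0}

lemma dist_line {n : ℕ} (x v : Fin n → ℝ) (τ : ℝ) :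
    dist (toEuc (x + τ • v)) (toEuc x) = |τ| * ‖toEuc v‖ := by
  rw [dist_eq_norm, show toEuc (x + τ • v) - toEuc x = τ • toEuc v from add_sub_cancel_left _ _,
    norm_smul, Real.norm_eq_abs]

lemma slope_tendsto {n : ℕ} (b : MvPolynomial (Fin n) ℝ) (x v : Fin n → ℝ)
    (hx : eval x b = 0) :
    Filter.Tendsto (fun τ : ℝ => eval (x + τ • v) b / τ) (nhdsWithin 0 (Set.Ioi 0))
      (nhds (gradSum b x v)) := by
  have hq : HasDerivAt (fun τ : ℝ => eval (x + τ • v) b) (gradSum b x v) 0 := by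
    simpa using hasDerivAt_line b x v 0
  have h1 := hasDerivAt_iff_tendsto_slope.mp hq
  have h2 := h1.mono_left (nhdsWithin_mono 0 (fun τ (hτ : τ ∈ Set.Ioi 0) => ne_of_gt hτ))
  refine h2.congr (fun τ => ?_)
  rw [slope_def_field]
  simp [hx]

lemma not_mem_TC {n : ℕ} (b : MvPolynomial (Fin n) ℝ) (x v : Fin n → ℝ)
    (hx : eval x b = 0) (hc : gradSum b x v < 0) :
    v ∉ tangentConeAt' {y : Fin n → ℝ | 0 ≤ eval y b} x := by
  classical
  intro hmem
  set C : Set (Fin n → ℝ) := {y : Fin n → ℝ | 0 ≤ eval y b} with hC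
  set c : ℝ := gradSum b x v with hcdef
  obtain ⟨L, hL, hLip⟩ := exists_lip b x 1
  set u : ℝ → ℝ := fun τ => Metric.infDist (toEuc (x + τ • v)) (toEuc '' C) / τ with hu
  set ε : ℝ := (-c) / (2 * L) with hε
  have hεpos : 0 < ε := div_pos (by linarith) (by linarith)
  have hxC : x ∈ C := by simp [hC, hx]
  have hne : (toEuc '' C).Nonempty := ⟨toEuc x, Set.mem_image_of_mem _ hxC⟩
  set δ : ℝ := min (1 / (2 * (‖toEuc v‖ + 1))) (L / (-c)) with hδ
  have hδpos : 0 < δ := lt_min (by positivity) (div_pos hL (by linarith))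
  have E1 : ∀ᶠ τ : ℝ in nhdsWithin 0 (Set.Ioi 0),
      eval (x + τ • v) b / τ < c / 2 :=
    (slope_tendsto b x v hx).eventually_lt_const (by linarith)
  have E2 : ∀ᶠ τ : ℝ in nhdsWithin 0 (Set.Ioi 0), τ ∈ Set.Ioo 0 δ :=
    Filter.eventually_of_mem (Ioo_mem_nhdsGT_of_mem ⟨le_refl 0, hδpos⟩) (fun τ hτ => hτ)
  have hev : ∀ᶠ τ : ℝ in nhdsWithin 0 (Set.Ioi 0), ε ≤ u τ := by
    filter_upwards [E1, E2] with τ h1 h2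
    have hτ0 : 0 < τ := h2.1
    have hτδ1 : τ < 1 / (2 * (‖toEuc v‖ + 1)) := lt_of_lt_of_le h2.2 (min_le_left _ _)
    have hτδ2 : τ < L / (-c) := lt_of_lt_of_le h2.2 (min_le_right _ _)
    have hτv : τ * ‖toEuc v‖ ≤ 1 / 2 := by
      have h0 : (0:ℝ) ≤ ‖toEuc v‖ := norm_nonneg _
      nlinarith [(lt_div_iff₀ (show (0:ℝ) < 2*(‖toEuc v‖+1) by linarith)).mp
        hτδ1]
    have hτc : (-c) * τ / (2 * L) ≤ 1 / 2 := by
      rw [div_le_div_iff₀ (by linarith) (by norm_num)]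
      have : (-c) * τ ≤ L := by
        rw [lt_div_iff₀ (by linarith)] at hτδ2
        linarith [hτδ2]
      linarith
    have hq1 : eval (x + τ • v) b < c / 2 * τ := by
      rw [div_lt_iff₀ hτ0] at h1; exact h1
    have hkey0 : ∀ p ∈ toEuc '' C, (-c) * τ / (2 * L) ≤ dist (toEuc (x + τ • v)) p := by
      rintro p ⟨y, hyC, rfl⟩
      by_cases hfar : 1 / 2 ≤ dist (toEuc (x + τ • v)) (toEuc y)
      · exact le_trans hτc hfar
      push_neg at hfar
      have hxτball : toEuc (x + τ • v) ∈ Metric.closedBall (toEuc x) 1 := by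
        rw [Metric.mem_closedBall, dist_line]
        rw [abs_of_pos hτ0]; linarith
      have hyball : toEuc y ∈ Metric.closedBall (toEuc x) 1 := by
        rw [Metric.mem_closedBall]
        calc dist (toEuc y) (toEuc x)
            ≤ dist (toEuc y) (toEuc (x + τ • v)) + dist (toEuc (x + τ • v)) (toEuc x) :=
              dist_triangle _ _ _
          _ ≤ 1/2 + τ * ‖toEuc v‖ := by
              rw [dist_line, abs_of_pos hτ0]
              exact add_le_add (le_of_lt (by rwa [dist_comm] at hfar)) (le_refl _)
          _ ≤ 1 := by linarith
      have hlip := hLip y (x + τ • v) hyball hxτball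
      have hy0 : 0 ≤ eval y b := hyC
      have hdiff : (-c) * τ / 2 ≤ eval y b - eval (x + τ • v) b := by
        have : c / 2 * τ < 0 := mul_neg_of_neg_of_pos (by linarith) hτ0
        nlinarith
      have : (-c) * τ / 2 ≤ L * dist (toEuc y) (toEuc (x + τ • v)) :=
        le_trans hdiff (le_trans (le_abs_self _) hlip)
      rw [dist_comm] at this
      rw [div_le_iff₀ (by linarith)] at this ⊢
      calc (-c) * τ = ((-c) * τ / 2) * 2 := by ring
        _ ≤ (L * dist (toEuc (x + τ • v)) (toEuc y)) * 2 := by linarith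
        _ = dist (toEuc (x + τ • v)) (toEuc y) * (2 * L) := by ring
    have hkey : (-c) * τ / (2 * L) ≤ Metric.infDist (toEuc (x + τ • v)) (toEuc '' C) := by
      rw [← not_lt]
      intro hlt
      obtain ⟨p, hp, hplt⟩ := (Metric.infDist_lt_iff hne).mp hlt
      exact absurd (hkey0 p hp) (not_le.mpr hplt)
    rw [hu]
    rw [le_div_iff₀ hτ0]
    calc ε * τ = (-c) * τ / (2 * L) := by rw [hε]; ring
      _ ≤ _ := hkey
  have hbdd : BddAbove {a : ℝ | ∀ᶠ τ in nhdsWithin 0 (Set.Ioi 0), a ≤ u τ} := by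
    refine ⟨‖toEuc v‖, fun a ha => ?_⟩
    have E0 : ∀ᶠ τ : ℝ in nhdsWithin 0 (Set.Ioi 0), τ ∈ Set.Ioi (0:ℝ) :=
      self_mem_nhdsWithin
    have ha' : ∀ᶠ τ in nhdsWithin 0 (Set.Ioi 0), a ≤ u τ := ha
    obtain ⟨τ, haτ, hτ0⟩ := (ha'.and E0).exists
    refine le_trans haτ ?_
    rw [hu, div_le_iff₀ hτ0]
    calc Metric.infDist (toEuc (x + τ • v)) (toEuc '' C)
        ≤ dist (toEuc (x + τ • v)) (toEuc x) :=
          Metric.infDist_le_dist_of_mem (Set.mem_image_of_mem _ hxC)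
      _ = τ * ‖toEuc v‖ := by rw [dist_line, abs_of_pos hτ0]
      _ = ‖toEuc v‖ * τ := by ring
  have hle : ε ≤ Filter.liminf u (nhdsWithin 0 (Set.Ioi 0)) := by
    rw [Filter.liminf_eq]
    exact le_csSup hbdd hev
  rw [hmem] at hle
  linarith

lemma mem_TC {n : ℕ} (b : MvPolynomial (Fin n) ℝ) (x v : Fin n → ℝ)
    (hx : eval x b = 0) (hw : ∃ k, eval x (pderiv k b) ≠ 0)
    (hc : 0 ≤ gradSum b x v) :
    v ∈ tangentConeAt' {y : Fin n → ℝ | 0 ≤ eval y b} x := by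
  classical
  set C : Set (Fin n → ℝ) := {y : Fin n → ℝ | 0 ≤ eval y b} with hC
  set c : ℝ := gradSum b x v with hcdef
  set w : Fin n → ℝ := fun k => eval x (pderiv k b) with hwdef
  set ρ : ℝ := ‖toEuc w‖ with hρdef
  have hρ : 0 < ρ := by
    rw [hρdef, norm_pos_iff]
    intro h0
    obtain ⟨k, hk⟩ := hw
    exact hk (by simpa [toEuc, hwdef] using congrArg (fun z : EuclideanSpace ℝ (Fin n) => z k) h0)
  have hρ2 : gradSum b x w = ρ ^ 2 := by
    rw [hρdef, EuclideanSpace.norm_eq, Real.sq_sqrt (Finset.sum_nonneg fun k _ => by positivity)]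
    unfold gradSum
    exact Finset.sum_congr rfl fun k _ => by
      rw [Real.norm_eq_abs, sq_abs]
      show eval x (pderiv k b) * eval x (pderiv k b) = (eval x (pderiv k b)) ^ 2
      ring
  -- continuity of the gradient pairing, giving a radius where it stays ≥ ρ²/2
  have hGc : ContinuousAt (fun z : EuclideanSpace ℝ (Fin n) => gradSum b z w) (toEuc x) :=
    (continuous_gradSumE b w).continuousAt
  obtain ⟨δ, hδpos, hδ⟩ := Metric.continuousAt_iff.mp hGc (ρ ^ 2 / 2) (by positivity)
  have hδ' : ∀ z : Fin n → ℝ, dist (toEuc z) (toEuc x) < δ → ρ ^ 2 / 2 ≤ gradSum b z w := by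
    intro z hz
    have := hδ hz
    rw [Real.dist_eq] at this
    have e1 : gradSum b (toEuc z) w = gradSum b z w := rfl
    have e2 : gradSum b (toEuc x) w = ρ ^ 2 := hρ2
    rw [e1, e2] at this
    have := abs_lt.mp this
    linarith [this.1]
  set R : ℝ := δ / 2 with hR
  have hRpos : 0 < R := by positivity
  set u : ℝ → ℝ := fun τ => Metric.infDist (toEuc (x + τ • v)) (toEuc '' C) / τ with hu
  set q : ℝ → ℝ := fun τ => eval (x + τ • v) b with hq
  have hxC : x ∈ C := by simp [hC, hx]
  -- q is continuous with q → 0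
  have hqcont : Tendsto q (nhdsWithin 0 (Set.Ioi 0)) (nhds 0) := by
    have h1 : ContinuousAt q 0 := ((hasDerivAt_line b x v 0).differentiableAt).continuousAt
    have h2 : q 0 = 0 := by simp [hq, hx]
    have h3 : Tendsto q (nhdsWithin 0 (Set.Ioi 0)) (nhds (q 0)) :=
      h1.tendsto.mono_left nhdsWithin_le_nhds
    rw [h2] at h3; exact h3
  have hslope := slope_tendsto b x v hx
  -- the squeeze function
  set g : ℝ → ℝ := fun τ => (2 / ρ) * max (-(q τ / τ)) 0 with hg
  have hgtendsto : Tendsto g (nhdsWithin 0 (Set.Ioi 0)) (nhds 0) := by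
    have h1 : Tendsto (fun τ => max (-(q τ / τ)) 0) (nhdsWithin 0 (Set.Ioi 0))
        (nhds (max (-c) 0)) := (hslope.neg).max tendsto_const_nhds
    have h2 : max (-c) 0 = 0 := max_eq_right (by linarith)
    rw [h2] at h1
    simpa using h1.const_mul (2 / ρ)
  -- eventual conditions
  have E1 : ∀ᶠ τ : ℝ in nhdsWithin 0 (Set.Ioi 0), τ ∈ Set.Ioo 0 (R / (‖toEuc v‖ + 1)) :=
    Filter.eventually_of_mem (Ioo_mem_nhdsGT_of_mem ⟨le_refl 0,
      by positivity⟩) (fun τ hτ => hτ)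
  have hqneg : Tendsto (fun τ => -(q τ)) (nhdsWithin 0 (Set.Ioi 0)) (nhds 0) := by
    simpa using hqcont.neg
  have E2 : ∀ᶠ τ : ℝ in nhdsWithin 0 (Set.Ioi 0), -(q τ) < R * ρ / 2 :=
    hqneg.eventually_lt_const (by positivity)
  have hf0 : ∀ᶠ τ : ℝ in nhdsWithin 0 (Set.Ioi 0), 0 ≤ u τ := by
    filter_upwards [E1] with τ h1
    exact div_nonneg Metric.infDist_nonneg h1.1.le
  have hfg : ∀ᶠ τ : ℝ in nhdsWithin 0 (Set.Ioi 0), u τ ≤ g τ := by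
    filter_upwards [E1, E2] with τ h1 h2
    have hτ0 : 0 < τ := h1.1
    have hτv : τ * ‖toEuc v‖ < R := by
      have h3 := (lt_div_iff₀ (show (0:ℝ) < ‖toEuc v‖ + 1 by positivity)).mp h1.2
      nlinarith [norm_nonneg (toEuc v), hτ0]
    by_cases hsgn : 0 ≤ q τ
    · have : x + τ • v ∈ C := hsgn
      have : u τ = 0 := by
        rw [hu]
        simp [Metric.infDist_zero_of_mem (Set.mem_image_of_mem _ this)]
      rw [this, hg]
      exact mul_nonneg (by positivity) (le_max_right _ _)
    push_neg at hsgn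
    set y₀ : Fin n → ℝ := x + τ • v with hy₀
    set T : ℝ := 2 * (-(q τ)) / ρ ^ 2 with hT
    have hTpos : 0 < T := by
      rw [hT]; apply div_pos (by linarith) (by positivity)
    have hTρ : T * ρ = 2 * (-(q τ)) / ρ := by
      rw [hT]; field_simp
    have hTρR : T * ρ < R := by
      rw [hTρ, div_lt_iff₀ hρ]
      calc 2 * (-(q τ)) = (-(q τ)) * 2 := by ring
        _ < (R * ρ / 2) * 2 := by linarith
        _ = R * ρ := by ring
    -- MVT along the gradient direction
    set φ : ℝ → ℝ := fun t => eval (y₀ + t • w) b with hφ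
    have hφd : ∀ t : ℝ, HasDerivAt φ (gradSum b (y₀ + t • w) w) t :=
      fun t => hasDerivAt_line b y₀ w t
    obtain ⟨ξ, hξ, hslope'⟩ := exists_hasDerivAt_eq_slope φ
      (fun t => gradSum b (y₀ + t • w) w) hTpos
      (HasDerivAt.continuousOn (fun t _ => hφd t)) (fun t _ => hφd t)
    have hmid : dist (toEuc (y₀ + ξ • w)) (toEuc x) < δ := by
      calc dist (toEuc (y₀ + ξ • w)) (toEuc x)
          ≤ dist (toEuc (y₀ + ξ • w)) (toEuc y₀) + dist (toEuc y₀) (toEuc x) :=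
            dist_triangle _ _ _
        _ = |ξ| * ρ + |τ| * ‖toEuc v‖ := by rw [dist_line, dist_line]
        _ < R + R := by
            apply add_lt_add
            · rw [abs_of_pos hξ.1]
              calc ξ * ρ ≤ T * ρ := mul_le_mul_of_nonneg_right hξ.2.le hρ.le
                _ < R := hTρR
            · rw [abs_of_pos hτ0]; exact hτv
        _ = δ := by rw [hR]; ring
    have hder : ρ ^ 2 / 2 ≤ gradSum b (y₀ + ξ • w) w := hδ' _ hmid
    have hφT : 0 ≤ φ T := by
      have hs := hslope'
      have hφ0 : φ 0 = q τ := by simp [hφ, hy₀, hq]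
      rw [sub_zero] at hs
      have : φ T - φ 0 = gradSum b (y₀ + ξ • w) w * T := by
        field_simp at hs
        linarith [hs]
      have h5 : ρ ^ 2 / 2 * T ≤ gradSum b (y₀ + ξ • w) w * T :=
        mul_le_mul_of_nonneg_right hder hTpos.le
      have h6 : ρ ^ 2 / 2 * T = -(q τ) := by
        rw [hT]; field_simp
      rw [hφ0] at this
      linarith
    have hzC : y₀ + T • w ∈ C := hφT
    have hle : Metric.infDist (toEuc y₀) (toEuc '' C) ≤ 2 * (-(q τ)) / ρ := by
      calc Metric.infDist (toEuc y₀) (toEuc '' C)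
          ≤ dist (toEuc y₀) (toEuc (y₀ + T • w)) :=
            Metric.infDist_le_dist_of_mem (Set.mem_image_of_mem _ hzC)
        _ = |T| * ρ := by rw [dist_comm, dist_line]
        _ = 2 * (-(q τ)) / ρ := by rw [abs_of_pos hTpos, hTρ]
    rw [hu, hg]
    have heq : (2 / ρ) * max (-(q τ / τ)) 0 ≥ (2 / ρ) * (-(q τ / τ)) :=
      mul_le_mul_of_nonneg_left (le_max_left _ _) (by positivity)
    have h7 : Metric.infDist (toEuc (x + τ • v)) (toEuc '' C) / τ
        ≤ (2 / ρ) * (-(q τ / τ)) := by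
      rw [div_le_iff₀ hτ0]
      calc Metric.infDist (toEuc (x + τ • v)) (toEuc '' C)
          ≤ 2 * (-(q τ)) / ρ := hle
        _ = (2 / ρ) * (-(q τ / τ)) * τ := by field_simp
    exact le_trans h7 heq
  have := squeeze_zero' hf0 hfg hgtendsto
  exact this.liminf_eq

lemma isClosed_C {n : ℕ} (b : MvPolynomial (Fin n) ℝ) :
    IsClosed {y : Fin n → ℝ | 0 ≤ eval y b} :=
  isClosed_le continuous_const (MvPolynomial.continuous_eval b)

lemma frontier_subset_zero {n : ℕ} (b : MvPolynomial (Fin n) ℝ) :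
    frontier {y : Fin n → ℝ | 0 ≤ eval y b} ⊆ {y : Fin n → ℝ | eval y b = 0} := by
  intro x hx
  rw [(isClosed_C b).frontier_eq] at hx
  obtain ⟨hx1, hx2⟩ := hx
  have h1 : (0:ℝ) ≤ eval x b := hx1
  rcases eq_or_lt_of_le h1 with h | h
  · exact h.symm
  exfalso
  apply hx2
  have hopen : IsOpen {y : Fin n → ℝ | 0 < eval y b} :=
    isOpen_lt continuous_const (MvPolynomial.continuous_eval b)
  have hsub : {y : Fin n → ℝ | 0 < eval y b} ⊆ interior {y : Fin n → ℝ | 0 ≤ eval y b} :=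
    interior_maximal (fun y hy => le_of_lt (show (0:ℝ) < eval y b from hy)) hopen
  exact hsub h

lemma sum_sq_pos {n : ℕ} (b : MvPolynomial (Fin n) ℝ) (x : Fin n → ℝ)
    (hw : ∃ k, eval x (pderiv k b) ≠ 0) :
    0 < gradSum b x (fun k => eval x (pderiv k b)) := by
  obtain ⟨k, hk⟩ := hw
  exact Finset.sum_pos' (fun i _ => mul_self_nonneg _)
    ⟨k, Finset.mem_univ k, mul_self_pos.mpr hk⟩

lemma mem_frontier_of {n : ℕ} (b : MvPolynomial (Fin n) ℝ) (x : Fin n → ℝ)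
    (hx : eval x b = 0) (hw : ∃ k, eval x (pderiv k b) ≠ 0) :
    x ∈ frontier {y : Fin n → ℝ | 0 ≤ eval y b} := by
  rw [(isClosed_C b).frontier_eq]
  refine ⟨le_of_eq hx.symm, ?_⟩
  intro hint
  set w : Fin n → ℝ := fun k => eval x (pderiv k b) with hwdef
  have hS : 0 < gradSum b x w := sum_sq_pos b x hw
  have hneg : gradSum b x (-w) = -gradSum b x w := by
    unfold gradSum
    rw [← Finset.sum_neg_distrib]
    exact Finset.sum_congr rfl fun k _ => by simp
  have hsl := slope_tendsto b x (-w) hx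
  have E1 : ∀ᶠ t : ℝ in nhdsWithin 0 (Set.Ioi 0),
      eval (x + t • (-w)) b / t < -(gradSum b x w) / 2 := by
    apply hsl.eventually_lt_const
    rw [hneg]; linarith
  have E0 : ∀ᶠ t : ℝ in nhdsWithin 0 (Set.Ioi 0), t ∈ Set.Ioi (0:ℝ) := self_mem_nhdsWithin
  have hcont : Continuous (fun t : ℝ => x + t • (-w)) := by continuity
  have htend : Tendsto (fun t : ℝ => x + t • (-w)) (nhdsWithin 0 (Set.Ioi 0)) (nhds x) := by
    have := (hcont.tendsto 0).mono_left (nhdsWithin_le_nhds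
      (s := Set.Ioi (0:ℝ)))
    simpa using this
  have E2 : ∀ᶠ t : ℝ in nhdsWithin 0 (Set.Ioi 0),
      (x + t • (-w)) ∈ interior {y : Fin n → ℝ | 0 ≤ eval y b} :=
    htend.eventually_mem (isOpen_interior.mem_nhds hint)
  obtain ⟨t, h1, h0, h2⟩ := (E1.and (E0.and E2)).exists
  have ht0 : (0:ℝ) < t := h0
  have hq : eval (x + t • (-w)) b < 0 := by
    have := (div_lt_iff₀ ht0).mp h1
    nlinarith
  have h3 : x + t • (-w) ∈ {y : Fin n → ℝ | 0 ≤ eval y b} := interior_subset h2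
  have : (0:ℝ) ≤ eval (x + t • (-w)) b := h3
  linarith

lemma gradSum_field {n m : ℕ} (b : MvPolynomial (Fin n) ℝ)
    (f : Fin n → MvPolynomial (Fin n) ℝ) (g : Fin n → Fin m → MvPolynomial (Fin n) ℝ)
    (x : Fin n → ℝ) (u : Fin m → ℝ) :
    gradSum b x (fun i => eval x (f i) + ∑ j, eval x (g i j) * u j)
      = (∑ k, eval x (pderiv k b) * eval x (f k))
        + ∑ j, (∑ k, eval x (pderiv k b) * eval x (g k j)) * u j := by
  unfold gradSum
  simp only [mul_add, Finset.mul_sum, Finset.sum_add_distrib]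
  congr 1
  rw [Finset.sum_comm]
  exact Finset.sum_congr rfl fun j _ => by
    rw [Finset.sum_mul]
    exact Finset.sum_congr rfl fun k _ => by ring

/-- `D` is viable for `ẋ = f(x) + g(x)u`, `u ∈ U`: at every boundary point some
admissible input keeps the vector field in the tangent cone. -/
def Viable {n m : ℕ} (f : Fin n → MvPolynomial (Fin n) ℝ)
    (g : Fin n → Fin m → MvPolynomial (Fin n) ℝ) (U : Set (Fin m → ℝ))
    (D : Set (Fin n → ℝ)) : Prop :=
  ∀ x ∈ frontier D, ∃ u ∈ U,
    (fun i => eval x (f i) + ∑ j, eval x (g i j) * u j) ∈ tangentConeAt' D x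

/-- with `∇b ≠ 0` on `{b = 0}` and unconstrained input,
`C = {b ≥ 0}` is viable iff there is no `x` with `b(x) = 0`, `∇b(x)ᵀg(x) = 0`
and `∇b(x)ᵀf(x) < 0`. -/
theorem viability_single_polynomial {n m : ℕ} (b : MvPolynomial (Fin n) ℝ)
    (f : Fin n → MvPolynomial (Fin n) ℝ)
    (g : Fin n → Fin m → MvPolynomial (Fin n) ℝ)
    (hgrad : ∀ x : Fin n → ℝ, eval x b = 0 → ∃ k, eval x (pderiv k b) ≠ 0) :
    Viable f g Set.univ {x : Fin n → ℝ | 0 ≤ eval x b} ↔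
      ¬ ∃ x : Fin n → ℝ, eval x b = 0 ∧
        (∀ j : Fin m, ∑ k, eval x (pderiv k b) * eval x (g k j) = 0) ∧
        ∑ k, eval x (pderiv k b) * eval x (f k) < 0 := by
  constructor
  · rintro hV ⟨x, hb0, hg0, hf0⟩
    obtain ⟨u, -, hu⟩ := hV x (mem_frontier_of b x hb0 (hgrad x hb0))
    refine not_mem_TC b x _ hb0 ?_ hu
    rw [gradSum_field]
    have : ∑ j, (∑ k, eval x (pderiv k b) * eval x (g k j)) * u j = 0 := by
      apply Finset.sum_eq_zero
      intro j _
      rw [hg0 j, zero_mul]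
    rw [this]
    simpa using hf0
  · intro hno x hxF
    have hb0 : eval x b = 0 := frontier_subset_zero b hxF
    by_cases hA : ∀ j : Fin m, ∑ k, eval x (pderiv k b) * eval x (g k j) = 0
    · have hc : 0 ≤ ∑ k, eval x (pderiv k b) * eval x (f k) := by
        by_contra h
        push_neg at h
        exact hno ⟨x, hb0, hA, h⟩
      refine ⟨0, Set.mem_univ _, ?_⟩
      apply mem_TC b x _ hb0 (hgrad x hb0)
      rw [gradSum_field]
      simpa using hc
    · push_neg at hA
      obtain ⟨j, hj⟩ := hA
      set a : ℝ := ∑ k, eval x (pderiv k b) * eval x (g k j) with ha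
      set c : ℝ := ∑ k, eval x (pderiv k b) * eval x (f k) with hcdef
      classical
      refine ⟨fun j' => if j' = j then (1 - c) / a else 0, Set.mem_univ _, ?_⟩
      apply mem_TC b x _ hb0 (hgrad x hb0)
      rw [gradSum_field]
      have : ∑ j', (∑ k, eval x (pderiv k b) * eval x (g k j')) *
          (if j' = j then (1 - c) / a else 0) = 1 - c := by
        rw [Finset.sum_eq_single j]
        · rw [if_pos rfl, ← ha, mul_div_cancel₀ _ hj]
        · intro j' _ hj'
          rw [if_neg hj', mul_zero]
        · intro h; exact absurd (Finset.mem_univ j) h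
      rw [this]
      linarith [hcdef]
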